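/- Let G be a clique expansion of a graph H on h vertices in which H has no isolated vertices, i.e., G is obtained by replacing each vertex v_i of H by a nonempty clique Q_i, with Q_i complete to Q_j when v_iv_j ∈ E(H) and anticomplete otherwise. If G is k-vertex-critical and G is not the complete graph K_k, then each clique Q_i has at most k−2 vertices, and hence |V(G)| ≤ (k−2)·h. -/

import Mathlib

open SimpleGraph

/-- A graph is `k`-vertex-critical if its chromatic number is `k` and deleting
any vertex lowers the chromatic number. -/
def IsKVertexCritical {V : Type*} (G : SimpleGraph V) (k : ℕ) : Prop :=
  G.chromaticNumber = (k : ℕ∞) ∧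
    ∀ v : V, (G.induce {u | u ≠ v}).chromaticNumber < (k : ℕ∞)

/-- The clique number of a graph. -/
noncomputable def cliqueNum' {V : Type*} (G : SimpleGraph V) : ℕ :=
  sSup {n | ∃ s : Finset V, G.IsNClique n s}

/-- `G` has no induced subgraph isomorphic to `H`. -/
def IndFree {W V : Type*} (H : SimpleGraph W) (G : SimpleGraph V) : Prop :=
  ¬ ∃ s : Set V, Nonempty (H ≃g G.induce s)

def CompleteTo {V : Type*} (G : SimpleGraph V) (S T : Set V) : Prop :=
  ∀ s ∈ S, ∀ t ∈ T, G.Adj s t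

def AnticompleteTo {V : Type*} (G : SimpleGraph V) (S T : Set V) : Prop :=
  ∀ s ∈ S, ∀ t ∈ T, ¬ G.Adj s t

/-- `M` is a module of `G`: each outside vertex is complete or anticomplete to `M`. -/
def IsModule {V : Type*} (G : SimpleGraph V) (M : Set V) : Prop :=
  ∀ v ∉ M, (∀ m ∈ M, G.Adj v m) ∨ (∀ m ∈ M, ¬ G.Adj v m)

/-- A non-trivial module: a module `M` with `2 ≤ |M| < |V(G)|`. -/
def IsNontrivialModule {V : Type*} (G : SimpleGraph V) (M : Set V) : Prop :=
  IsModule G M ∧ 2 ≤ M.ncard ∧ M.ncard < Nat.card V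

/-- `G` is an expansion of `H` with parts `Q w`: parts are nonempty, partition `V(G)`,
are completely joined along edges of `H` and anticomplete along non-edges. -/
def IsExpansion {V W : Type*} (G : SimpleGraph V) (H : SimpleGraph W) (Q : W → Set V) : Prop :=
  (∀ w, (Q w).Nonempty) ∧
  (Pairwise fun w w' => Disjoint (Q w) (Q w')) ∧
  (∀ v, ∃ w, v ∈ Q w) ∧
  (∀ w w', H.Adj w w' → CompleteTo G (Q w) (Q w')) ∧
  (∀ w w', w ≠ w' → ¬ H.Adj w w' → AnticompleteTo G (Q w) (Q w'))

/-- The path on four vertices. -/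
def P4 : SimpleGraph (Fin 4) := SimpleGraph.pathGraph 4

/-- The path on five vertices. -/
def P5 : SimpleGraph (Fin 5) := SimpleGraph.pathGraph 5

/-- The gem: a `P₄` (0-1-2-3) plus a dominating vertex 4. -/
def gem : SimpleGraph (Fin 5) :=
  SimpleGraph.fromRel (fun a b =>
    (a, b) ∈ [((0 : Fin 5), (1 : Fin 5)), (1, 2), (2, 3), (4, 0), (4, 1), (4, 2), (4, 3)])

/-- The five-cycle. -/
def cycle5 : SimpleGraph (Fin 5) :=
  SimpleGraph.fromRel (fun a b =>
    (a, b) ∈ [((0 : Fin 5), (1 : Fin 5)), (1, 2), (2, 3), (3, 4), (4, 0)])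

/-- if `G` is a clique expansion of a graph `H` without isolated vertices
and `G` is `k`-vertex-critical but not complete, then each part has at most `k − 2`
vertices and `|V(G)| ≤ (k − 2)·|V(H)|`. -/
theorem clique_expansion_size_bound {V W : Type*} [Fintype V] [Fintype W]
    (G : SimpleGraph V) (H : SimpleGraph W) (Q : W → Set V)
    (hexp : IsExpansion G H Q) (hcliques : ∀ w, G.IsClique (Q w))
    (hnoiso : ∀ w : W, ∃ w' : W, H.Adj w w')
    (k : ℕ) (hcrit : IsKVertexCritical G k) (hnc : G ≠ ⊤) :
    (∀ w, (Q w).ncard ≤ k - 2) ∧ Fintype.card V ≤ (k - 2) * Fintype.card W := by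
  classical
  obtain ⟨hne, hdisj, hcover, hcomp, hanti⟩ := hexp
  have key : ∀ w, (Q w).ncard ≤ k - 2 := by
    intro w
    by_contra hlt
    push_neg at hlt
    obtain ⟨w', hww'⟩ := hnoiso w
    obtain ⟨v', hv'⟩ := hne w'
    have hwne : w ≠ w' := fun h => (H.loopless.irrefl w (h ▸ hww'))
    have hv'notin : v' ∉ Q w := fun h => Set.disjoint_left.mp (hdisj hwne) h hv'
    set S : Set V := insert v' (Q w) with hSdef
    have hScl : G.IsClique S := by
      apply (hcliques w).insert
      intro b hb _
      exact (hcomp w w' hww' b hb v' hv').symm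
    have hScard : k ≤ S.ncard := by
      have h2 : S.ncard = (Q w).ncard + 1 := Set.ncard_insert_of_notMem hv'notin (Set.toFinite _)
      omega
    by_cases hU : S = Set.univ
    · apply hnc
      ext u v
      simp only [top_adj]
      constructor
      · exact fun h => h.ne
      · intro h
        exact hScl (hU ▸ Set.mem_univ u) (hU ▸ Set.mem_univ v) h
    · obtain ⟨u, hu⟩ := (Set.ne_univ_iff_exists_notMem S).mp hU
      have hlt2 := hcrit.2 u
      set G' := G.induce {x : V | x ≠ u} with hG'def
      set s : Finset {x : V | x ≠ u} :=
        ((Set.toFinite S).toFinset).subtype (fun x => x ∈ {x : V | x ≠ u}) with hsdef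
      have hmem : ∀ a : {x : V | x ≠ u}, a ∈ s ↔ (a : V) ∈ S := by
        intro a
        simp only [hsdef, Finset.mem_subtype, Set.Finite.mem_toFinset]
      have hscl : G'.IsClique (s : Set {x : V | x ≠ u}) := by
        intro a ha b hb hab
        have ha' : (a : V) ∈ S := (hmem a).mp ha
        have hb' : (b : V) ∈ S := (hmem b).mp hb
        exact hScl ha' hb' (fun h => hab (Subtype.ext h))
      have hcard : S.ncard ≤ s.card := by
        rw [Set.ncard_eq_toFinset_card S (Set.toFinite S), hsdef, Finset.card_subtype,
          Finset.filter_true_of_mem]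
        intro x hx
        exact fun h => hu (h ▸ (Set.Finite.mem_toFinset _).mp hx)
      have hchrom := hscl.card_le_chromaticNumber
      have : (k : ℕ∞) ≤ G'.chromaticNumber := by
        refine le_trans ?_ hchrom
        exact_mod_cast le_trans hScard hcard
      exact absurd (lt_of_le_of_lt this hlt2) (lt_irrefl _)
  refine ⟨key, ?_⟩
  have huniv : (Finset.univ : Finset V)
      = Finset.univ.biUnion (fun w => (Set.toFinite (Q w)).toFinset) := by
    ext v
    simp only [Finset.mem_univ, Finset.mem_biUnion, Set.Finite.mem_toFinset, true_iff,
      true_and]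
    exact hcover v
  have hcardV : Fintype.card V
      = ∑ w : W, ((Set.toFinite (Q w)).toFinset).card := by
    rw [← Finset.card_univ, huniv]
    apply Finset.card_biUnion
    intro x _ y _ hxy
    rw [Function.onFun, Finset.disjoint_left]
    intro a ha hb
    exact Set.disjoint_left.mp (hdisj hxy) ((Set.Finite.mem_toFinset _).mp ha)
      ((Set.Finite.mem_toFinset _).mp hb)
  rw [hcardV]
  calc ∑ w : W, ((Set.toFinite (Q w)).toFinset).card
      ≤ ∑ _w : W, (k - 2) := by
        apply Finset.sum_le_sum
        intro w _
        rw [← Set.ncard_eq_toFinset_card (Q w) (Set.toFinite (Q w))]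
        exact key w
    _ = (k - 2) * Fintype.card W := by
        rw [Finset.sum_const, Finset.card_univ, smul_eq_mul, Nat.mul_comm]
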